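/- In the augmented graph G' built from a strongly connected directed graph G with parameters ν, k, ε satisfying ν/ε + ν < m and (1+ε)(2ν/(εk) + k) < n and d_min^out ≥ k: if the minimum (s,t)-cut capacity is at most ν/ε + ν, then G has a separation triple (L,S,R) with x ∈ L, |S| ≤ (1+ε)k, and vol^out_G(L) ≤ ν/ε + ν + 1. -/

import Mathlib

open Finset ENNReal

inductive AugV (V : Type) where
  | s : AugV V
  | t : AugV V
  | inV : V → AugV V
  | outV : V → AugV V
deriving DecidableEq

variable {V : Type} [Fintype V] [DecidableEq V]

instance : Fintype (AugV V) :=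
  Fintype.ofSurjective (fun a : (Unit ⊕ Unit) ⊕ (V ⊕ V) =>
    match a with
    | .inl (.inl _) => AugV.s
    | .inl (.inr _) => AugV.t
    | .inr (.inl v) => AugV.inV v
    | .inr (.inr v) => AugV.outV v)
    (by intro b
        cases b with
        | s => exact ⟨.inl (.inl ()), rfl⟩
        | t => exact ⟨.inl (.inr ()), rfl⟩
        | inV v => exact ⟨.inr (.inl v), rfl⟩
        | outV v => exact ⟨.inr (.inr v), rfl⟩)

/-- The out-degree of `v` in the directed graph with edge set `E`. -/
def outDeg (E : Finset (V × V)) (v : V) : ℕ :=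
  (Finset.univ.filter fun w => (v, w) ∈ E).card

/-- The capacities of the augmented graph `G'` built from the directed graph
`G = (V,E)` with seed vertex `x` and parameters `ν, k, ε`:
edges `(v_in, v_out)` of capacity `ν/(εk)` for `v ≠ x`, edges `(v_out, w_in)`
of capacity `∞` for `(v,w) ∈ E` (there is no `x_in`), edges `(v_out, t)` of
capacity `deg^out(v)`, and the edge `(s, x_out)` of capacity `ν/ε + ν + 1`. -/
noncomputable def augCap (E : Finset (V × V)) (x : V) (ν k : ℕ) (ε : ℝ) :
    AugV V → AugV V → ℝ≥0∞
  | AugV.inV v, AugV.outV w =>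
      if v = w ∧ v ≠ x then ENNReal.ofReal ((ν : ℝ) / (ε * k)) else 0
  | AugV.outV v, AugV.inV w => if (v, w) ∈ E ∧ w ≠ x then ⊤ else 0
  | AugV.outV v, AugV.t => (outDeg E v : ℝ≥0∞)
  | AugV.s, AugV.outV v =>
      if v = x then ENNReal.ofReal ((ν : ℝ) / ε + (ν : ℝ) + 1) else 0
  | _, _ => 0

/-- The capacity of a set of edges `C` of the augmented graph. -/
noncomputable def cutCap (c : AugV V → AugV V → ℝ≥0∞)
    (C : Finset (AugV V × AugV V)) : ℝ≥0∞ :=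
  ∑ e ∈ C, c e.1 e.2

/-- `C` is an `(s,t)`-edge-cut: after removing the edges of `C`, there is no
path from `s` to `t` along edges of positive capacity. -/
def IsSTCut (c : AugV V → AugV V → ℝ≥0∞) (C : Finset (AugV V × AugV V)) : Prop :=
  ¬ Relation.ReflTransGen (fun a b => c a b ≠ 0 ∧ (a, b) ∉ C) AugV.s AugV.t

/-- Suppose the parameters satisfy `ν/ε + ν < m`, `(1+ε)(2ν/(εk) + k) < n`
and `d_min^out ≥ k`. If the minimum `(s,t)`-cut capacity of the augmented
graph `G'` is at most `ν/ε + ν`, then `G` has a separation triple `(L,S,R)`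
with `x ∈ L`, `|S| ≤ (1+ε)k` and `vol^out(L) ≤ ν/ε + ν + 1`. -/
theorem stmt15 (E : Finset (V × V)) (x : V) (ν k : ℕ) (ε : ℝ)
    (hν : 0 < ν) (hk : 0 < k) (hε : 0 < ε)
    (hstrong : ∀ u v : V, Relation.ReflTransGen (fun a b => (a, b) ∈ E) u v)
    (hm : (ν : ℝ) / ε + (ν : ℝ) < (E.card : ℝ))
    (hn : (1 + ε) * (2 * (ν : ℝ) / (ε * k) + (k : ℝ)) < (Fintype.card V : ℝ))
    (hdmin : ∀ v : V, k ≤ outDeg E v)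
    (hcut : sInf {r : ℝ≥0∞ | ∃ C : Finset (AugV V × AugV V),
        IsSTCut (augCap E x ν k ε) C ∧ cutCap (augCap E x ν k ε) C = r} ≤
      ENNReal.ofReal ((ν : ℝ) / ε + (ν : ℝ))) :
    ∃ L S R : Finset V,
      (∀ v : V, v ∈ L ∨ v ∈ S ∨ v ∈ R) ∧
      Disjoint L S ∧ Disjoint L R ∧ Disjoint S R ∧
      L.Nonempty ∧ R.Nonempty ∧
      (∀ e ∈ E, ¬(e.1 ∈ L ∧ e.2 ∈ R)) ∧
      x ∈ L ∧
      (S.card : ℝ) ≤ (1 + ε) * (k : ℝ) ∧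
      ((∑ v ∈ L, outDeg E v : ℕ) : ℝ) ≤ (ν : ℝ) / ε + (ν : ℝ) + 1 := by

  classical
  set c := augCap E x ν k ε with hc
  -- the set of achievable cut values is finite and nonempty, so sInf is attained
  have hsetfin : {r : ℝ≥0∞ | ∃ C : Finset (AugV V × AugV V),
      IsSTCut c C ∧ cutCap c C = r}.Finite := by
    apply (Set.finite_range (cutCap c)).subset
    rintro r ⟨C, _, hC⟩
    exact ⟨C, hC⟩
  have hsetne : {r : ℝ≥0∞ | ∃ C : Finset (AugV V × AugV V),
      IsSTCut c C ∧ cutCap c C = r}.Nonempty := by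
    refine ⟨cutCap c Finset.univ, Finset.univ, ?_, rfl⟩
    intro h
    rcases Relation.ReflTransGen.cases_head h with h' | ⟨b, hb, _⟩
    · exact nomatch h'
    · exact hb.2 (Finset.mem_univ _)
  obtain ⟨C, hCcut, hCval⟩ := hsetne.csInf_mem hsetfin
  rw [← hCval] at hcut
  -- reachability from s avoiding the cut
  set A : AugV V → Prop :=
    fun a => Relation.ReflTransGen (fun a b => c a b ≠ 0 ∧ (a, b) ∉ C) AugV.s a with hA
  have hnt : ¬ A AugV.t := hCcut
  have hcross : ∀ a b, A a → ¬ A b → c a b ≠ 0 → (a, b) ∈ C := by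
    intro a b ha hb hab
    by_contra h
    exact hb (ha.tail ⟨hab, h⟩)
  have hCfin : cutCap c C ≠ ⊤ :=
    ne_top_of_le_ne_top ENNReal.ofReal_ne_top hcut
  have hsingle : ∀ e ∈ C, c e.1 e.2 ≤ cutCap c C := by
    intro e he
    exact Finset.single_le_sum (f := fun e => c e.1 e.2) (fun _ _ => zero_le) he
  have hnum : (0:ℝ) < (ν : ℝ) / ε + (ν : ℝ) + 1 := by positivity
  -- x_out is reachable
  have hxA : A (AugV.outV x) := by
    refine Relation.ReflTransGen.single ⟨?_, ?_⟩
    · have h2 : c AugV.s (AugV.outV x) = ENNReal.ofReal ((ν : ℝ) / ε + (ν : ℝ) + 1) := by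
        simp [hc, augCap]
      rw [h2]
      simp only [Ne, ENNReal.ofReal_eq_zero, not_le]
      linarith
    · intro hmem
      have h1 := (hsingle _ hmem).trans hcut
      have h2 : c AugV.s (AugV.outV x) = ENNReal.ofReal ((ν : ℝ) / ε + (ν : ℝ) + 1) := by
        simp [hc, augCap]
      rw [h2, ENNReal.ofReal_le_ofReal_iff (by positivity)] at h1
      linarith
  -- x_in is not reachable
  have hnotInX : ¬ A (AugV.inV x) := by
    intro h
    rcases Relation.ReflTransGen.cases_tail h with h' | ⟨b, _, hstep⟩
    · exact nomatch h'
    · have := hstep.1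
      cases b with
      | s => simp [hc, augCap] at this
      | t => simp [hc, augCap] at this
      | inV w => simp [hc, augCap] at this
      | outV w => simp [hc, augCap] at this
  -- if v_out is reachable then v = x or v_in is reachable
  have houtin : ∀ v, A (AugV.outV v) → v = x ∨ A (AugV.inV v) := by
    intro v hv
    rcases Relation.ReflTransGen.cases_tail hv with h' | ⟨b, hb, hstep⟩
    · exact nomatch h'
    · have h1 := hstep.1
      cases b with
      | s =>
        left
        by_contra hvx
        simp [hc, augCap, hvx] at h1
      | t => simp [hc, augCap] at h1
      | outV w => simp [hc, augCap] at h1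
      | inV w =>
        right
        have hwv : w = v := by
          by_contra hwv
          simp [hc, augCap, hwv] at h1
        rw [← hwv]
        exact hb
  -- no infinite edge crosses
  have hinfA : ∀ v w, (v, w) ∈ E → w ≠ x → A (AugV.outV v) → A (AugV.inV w) := by
    intro v w hvw hwx hv
    by_contra hw
    have hcap : c (AugV.outV v) (AugV.inV w) = ⊤ := by
      simp [hc, augCap, hvw, hwx]
    have := hsingle _ (hcross _ _ hv hw (by rw [hcap]; exact ENNReal.top_ne_zero))
    rw [hcap] at this
    exact hCfin (top_le_iff.mp this)
  -- define the partition
  set L : Finset V := Finset.univ.filter (fun v => A (AugV.outV v)) with hL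
  set S : Finset V := Finset.univ.filter
    (fun v => A (AugV.inV v) ∧ ¬ A (AugV.outV v)) with hS
  set R : Finset V := Finset.univ.filter
    (fun v => ¬ A (AugV.inV v) ∧ ¬ A (AugV.outV v)) with hR
  have hxL : x ∈ L := by simp [hL, hxA]
  -- capacity accounting
  have hSx : ∀ v ∈ S, v ≠ x := by
    intro v hv hvx
    rw [hS, Finset.mem_filter] at hv
    exact hnotInX (hvx ▸ hv.2.1)
  have hpos2 : (0:ℝ) < (ν : ℝ) / (ε * k) := by positivity
  have hD1C : ∀ v ∈ S, (AugV.inV v, AugV.outV v) ∈ C := by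
    intro v hv
    have hv' := hv
    rw [hS, Finset.mem_filter] at hv'
    refine hcross _ _ hv'.2.1 hv'.2.2 ?_
    have : c (AugV.inV v) (AugV.outV v) = ENNReal.ofReal ((ν : ℝ) / (ε * k)) := by
      simp [hc, augCap, hSx v hv]
    rw [this]
    simp [ENNReal.ofReal_eq_zero]
    linarith
  have hD2C : ∀ v ∈ L, (AugV.outV v, AugV.t) ∈ C := by
    intro v hv
    rw [hL, Finset.mem_filter] at hv
    refine hcross _ _ hv.2 hnt ?_
    have : c (AugV.outV v) AugV.t = (outDeg E v : ℝ≥0∞) := by simp [hc, augCap]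
    rw [this]
    simp only [Ne, Nat.cast_eq_zero]
    have := hdmin v
    omega

  -- crossing edge sets
  set D1 : Finset (AugV V × AugV V) := S.image (fun v => (AugV.inV v, AugV.outV v)) with hD1
  set D2 : Finset (AugV V × AugV V) := L.image (fun v => (AugV.outV v, AugV.t)) with hD2
  have hsub : D1 ∪ D2 ⊆ C := by
    intro e he
    rcases Finset.mem_union.mp he with h | h
    · obtain ⟨v, hv, rfl⟩ := Finset.mem_image.mp h
      exact hD1C v hv
    · obtain ⟨v, hv, rfl⟩ := Finset.mem_image.mp h
      exact hD2C v hv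
  have hdisj12 : Disjoint D1 D2 := by
    rw [Finset.disjoint_left]
    rintro e h1 h2
    obtain ⟨v, _, rfl⟩ := Finset.mem_image.mp h1
    obtain ⟨w, _, he⟩ := Finset.mem_image.mp h2
    exact nomatch (congrArg Prod.snd he)
  -- the key capacity inequality
  have hsum : (S.card : ℝ≥0∞) * ENNReal.ofReal ((ν : ℝ) / (ε * k))
      + ((∑ v ∈ L, outDeg E v : ℕ) : ℝ≥0∞) ≤ ENNReal.ofReal ((ν : ℝ) / ε + ν) := by
    have h1 : ∑ e ∈ D1 ∪ D2, c e.1 e.2 ≤ cutCap c C :=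
      Finset.sum_le_sum_of_subset hsub
    rw [Finset.sum_union hdisj12] at h1
    have e1 : ∑ e ∈ D1, c e.1 e.2
        = (S.card : ℝ≥0∞) * ENNReal.ofReal ((ν : ℝ) / (ε * k)) := by
      rw [hD1, Finset.sum_image
        (by intro a _ b _ h; exact AugV.inV.inj (congrArg Prod.fst h))]
      calc ∑ v ∈ S, c (AugV.inV v) (AugV.outV v)
          = ∑ _v ∈ S, ENNReal.ofReal ((ν : ℝ) / (ε * k)) :=
            Finset.sum_congr rfl (fun v hv => by simp [hc, augCap, hSx v hv])
        _ = (S.card : ℝ≥0∞) * ENNReal.ofReal ((ν : ℝ) / (ε * k)) := by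
            rw [Finset.sum_const, nsmul_eq_mul]
    have e2 : ∑ e ∈ D2, c e.1 e.2 = ((∑ v ∈ L, outDeg E v : ℕ) : ℝ≥0∞) := by
      rw [hD2, Finset.sum_image
        (by intro a _ b _ h; exact AugV.outV.inj (congrArg Prod.fst h))]
      rw [Nat.cast_sum]
      exact Finset.sum_congr rfl (fun v hv => by simp [hc, augCap])
    rw [e1, e2] at h1
    exact h1.trans hcut
  -- pass to the reals
  have hreal : (S.card : ℝ) * ((ν : ℝ) / (ε * k)) + ((∑ v ∈ L, outDeg E v : ℕ) : ℝ)
      ≤ (ν : ℝ) / ε + ν := by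
    have h := ENNReal.toReal_mono ENNReal.ofReal_ne_top hsum
    have ha : ((S.card : ℝ≥0∞) * ENNReal.ofReal ((ν : ℝ) / (ε * k))) ≠ ⊤ :=
      ENNReal.mul_ne_top (ENNReal.natCast_ne_top _) ENNReal.ofReal_ne_top
    rw [ENNReal.toReal_add ha (ENNReal.natCast_ne_top _), ENNReal.toReal_mul,
      ENNReal.toReal_natCast, ENNReal.toReal_natCast, ENNReal.toReal_ofReal hpos2.le,
      ENNReal.toReal_ofReal (by positivity)] at h
    exact h
  have hSnn : (0:ℝ) ≤ (S.card : ℝ) * ((ν : ℝ) / (ε * k)) := by positivity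
  have hLnn : (0:ℝ) ≤ ((∑ v ∈ L, outDeg E v : ℕ) : ℝ) := Nat.cast_nonneg _
  -- volume bound
  have hvol : ((∑ v ∈ L, outDeg E v : ℕ) : ℝ) ≤ (ν : ℝ) / ε + ν + 1 := by linarith
  -- size of S
  have hScard : (S.card : ℝ) ≤ (1 + ε) * k := by
    have hid : ((1 + ε) * k) * ((ν : ℝ) / (ε * k)) = (ν : ℝ) / ε + ν := by
      field_simp
    have h2 : (S.card : ℝ) * ((ν : ℝ) / (ε * k)) ≤ ((1 + ε) * k) * ((ν : ℝ) / (ε * k)) := by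
      rw [hid]; linarith
    exact le_of_mul_le_mul_right h2 hpos2
  -- R is nonempty
  have hRne : R.Nonempty := by
    rw [Finset.nonempty_iff_ne_empty]
    intro hRe
    have hcover : (Finset.univ : Finset V) ⊆ L ∪ S := by
      intro v _
      by_contra hv
      have hout : ¬ A (AugV.outV v) := fun h => hv (Finset.mem_union_left _ (by simp [hL, h]))
      have hin : ¬ A (AugV.inV v) :=
        fun h => hv (Finset.mem_union_right _ (by simp [hS, h, hout]))
      have : v ∈ R := by simp [hR, hin, hout]
      rw [hRe] at this
      exact absurd this (Finset.notMem_empty v)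
    have hcard : (Fintype.card V : ℝ) ≤ (L.card : ℝ) + S.card := by
      have h := (Finset.card_le_card hcover).trans (Finset.card_union_le L S)
      rw [Finset.card_univ] at h
      exact_mod_cast h
    have h3 : L.card • k ≤ ∑ v ∈ L, outDeg E v :=
      Finset.card_nsmul_le_sum L _ k fun v _ => hdmin v
    rw [smul_eq_mul] at h3
    have h3' : (L.card : ℝ) * k ≤ ((∑ v ∈ L, outDeg E v : ℕ) : ℝ) := by exact_mod_cast h3
    have h4 : (L.card : ℝ) ≤ (1 + ε) * (2 * (ν : ℝ) / (ε * k)) := by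
      have hid2 : ((1 + ε) * (2 * (ν : ℝ) / (ε * k))) * k = 2 * (ν : ℝ) / ε + 2 * ν := by
        field_simp
      have hνε : (0:ℝ) ≤ (ν : ℝ) / ε := by positivity
      have hνnn : (0:ℝ) ≤ (ν : ℝ) := Nat.cast_nonneg _
      have h5 : (L.card : ℝ) * k ≤ ((1 + ε) * (2 * (ν : ℝ) / (ε * k))) * k := by
        rw [hid2]
        have hd : 2 * (ν : ℝ) / ε = 2 * ((ν : ℝ) / ε) := by ring
        rw [hd]
        linarith
      exact le_of_mul_le_mul_right h5 (by positivity)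
    have hexp : (1 + ε) * (2 * (ν : ℝ) / (ε * k) + k)
        = (1 + ε) * (2 * (ν : ℝ) / (ε * k)) + (1 + ε) * k := by ring
    rw [hexp] at hn
    linarith
  -- no edge from L to R
  have hLR : ∀ e ∈ E, ¬(e.1 ∈ L ∧ e.2 ∈ R) := by
    rintro ⟨v, w⟩ he ⟨hvL, hwR⟩
    rw [hL, Finset.mem_filter] at hvL
    rw [hR, Finset.mem_filter] at hwR
    by_cases hwx : w = x
    · exact hwR.2.2 (hwx ▸ hxA)
    · exact hwR.2.1 (hinfA v w he hwx hvL.2)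
  -- totality and disjointness
  have htot : ∀ v : V, v ∈ L ∨ v ∈ S ∨ v ∈ R := by
    intro v
    by_cases h1 : A (AugV.outV v)
    · left; simp [hL, h1]
    · by_cases h2 : A (AugV.inV v)
      · right; left; simp [hS, h1, h2]
      · right; right; simp [hR, h1, h2]
  have hdLS : Disjoint L S := by
    rw [Finset.disjoint_left]
    intro v h1 h2
    rw [hL, Finset.mem_filter] at h1
    rw [hS, Finset.mem_filter] at h2
    exact h2.2.2 h1.2
  have hdLR : Disjoint L R := by
    rw [Finset.disjoint_left]
    intro v h1 h2
    rw [hL, Finset.mem_filter] at h1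
    rw [hR, Finset.mem_filter] at h2
    exact h2.2.2 h1.2
  have hdSR : Disjoint S R := by
    rw [Finset.disjoint_left]
    intro v h1 h2
    rw [hS, Finset.mem_filter] at h1
    rw [hR, Finset.mem_filter] at h2
    exact h2.2.1 h1.2.1
  exact ⟨L, S, R, htot, hdLS, hdLR, hdSR, ⟨x, hxL⟩, hRne, hLR, hxL, hScard, hvol⟩
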